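/- Let Y ⊆ T be a nonempty set which is dominant with respect to D ⊆ I, where |D| = |Y| + 1. Then there exists a unique unordered pair of distinct elements a, b ∈ D such that min_a Y = min_b Y; that is, there exist a, b ∈ D with a ≠ b and min_a Y = min_b Y, and for any two other distinct elements k, l ∈ D not both in {a, b}, min_k Y ≠ min_l Y. -/

import Mathlib

/-- `X ⊆ T` is dominant with respect to `C ⊆ I` (for the family of linear orders `o`)
if either `X = ∅`, or `X ≠ ∅` and there is no `y : T` with `min_i X <_i y` for all `i ∈ C`. -/
def Dominant {T I : Type*} (o : I → LinearOrder T) (X : Finset T) (C : Finset I) : Prop :=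
  ∀ hX : X.Nonempty, ¬ ∃ y : T, ∀ i ∈ C, (o i).lt (@Finset.min' T (o i) X hX) y

/-- If `Y ⊆ T` is nonempty and dominant with respect to `D ⊆ I` with `|D| = |Y| + 1`,
then there is a unique unordered pair of distinct colors `a, b ∈ D` with
`min_a Y = min_b Y`. -/
theorem stmt10 {T I : Type*} [Fintype T] [Fintype I] [Nonempty T] [Nonempty I]
    [DecidableEq T] [DecidableEq I] (o : I → LinearOrder T)
    (Y : Finset T) (D : Finset I) (hY : Y.Nonempty)
    (hcard : D.card = Y.card + 1) (hdom : Dominant o Y D) :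
    ∃ a ∈ D, ∃ b ∈ D, a ≠ b ∧
      @Finset.min' T (o a) Y hY = @Finset.min' T (o b) Y hY ∧
      ∀ k ∈ D, ∀ l ∈ D, k ≠ l →
        @Finset.min' T (o k) Y hY = @Finset.min' T (o l) Y hY →
        ({k, l} : Finset I) = {a, b} := by
  classical
  set f : I → T := fun i => @Finset.min' T (o i) Y hY with hf
  have hmem : ∀ i, f i ∈ Y := fun i => @Finset.min'_mem T (o i) Y hY
  have hsurj : ∀ y ∈ Y, ∃ i ∈ D, f i = y := by
    intro y hy
    have h := hdom hY
    push_neg at h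
    obtain ⟨i, hi, hlt⟩ := h y
    refine ⟨i, hi, ?_⟩
    have h1 : (o i).le (f i) y := @Finset.min'_le T (o i) Y y hy
    have h2 : (o i).le y (f i) := hlt
    exact @le_antisymm T (o i).toPartialOrder _ _ h1 h2
  have hltc : Y.card < D.card := by omega
  obtain ⟨a, ha, b, hb, hab, hfab⟩ :=
    Finset.exists_ne_map_eq_of_card_lt_of_maps_to hltc (fun i _ => hmem i)
  have himgE : (D.erase b).image f = Y := by
    apply Finset.Subset.antisymm
    · intro y hy
      obtain ⟨i, _, rfl⟩ := Finset.mem_image.mp hy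
      exact hmem i
    · intro y hy
      obtain ⟨i, hi, hfi⟩ := hsurj y hy
      by_cases hib : i = b
      · exact Finset.mem_image.mpr ⟨a, Finset.mem_erase.mpr ⟨hab, ha⟩, by rw [hfab, ← hib, hfi]⟩
      · exact Finset.mem_image.mpr ⟨i, Finset.mem_erase.mpr ⟨hib, hi⟩, hfi⟩
  have hinj : Set.InjOn f (D.erase b) := by
    apply Finset.injOn_of_card_image_eq
    rw [himgE, Finset.card_erase_of_mem hb, hcard]
    simp
  refine ⟨a, ha, b, hb, hab, hfab, ?_⟩
  intro k hk l hl hkl hfkl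
  by_cases hkb : k = b
  · have hlb : l ≠ b := fun h => hkl (hkb.trans h.symm)
    have h2 : f l = f a := hfkl.symm.trans ((congrArg f hkb).trans hfab.symm)
    have hla : l = a := hinj (Finset.mem_erase.mpr ⟨hlb, hl⟩)
      (Finset.mem_erase.mpr ⟨hab, ha⟩) h2
    rw [hkb, hla, Finset.pair_comm]
  · by_cases hlb : l = b
    · have h2 : f k = f a := hfkl.trans ((congrArg f hlb).trans hfab.symm)
      have hka : k = a := hinj (Finset.mem_erase.mpr ⟨hkb, hk⟩)
        (Finset.mem_erase.mpr ⟨hab, ha⟩) h2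
      rw [hka, hlb]
    · exact absurd (hinj (Finset.mem_erase.mpr ⟨hkb, hk⟩) (Finset.mem_erase.mpr ⟨hlb, hl⟩) hfkl) hkl
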